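/- Let ψ(t) = (t^α − 1)/log(t^α) for t > 0, t ≠ 1 and ψ(1) = 1, with α ∈ (0, 1]. Then for y > 1, ψ^{-1}(y) = (−y W_{−1}(−(1/y) e^{−1/y}))^{1/α}, and for y ∈ (0, 1), ψ^{-1}(y) = (−y W_0(−(1/y) e^{−1/y}))^{1/α}, and ψ^{-1}(1) = 1. -/

import Mathlib

open Real

/-- ψ_mSt(t; α, 0): (t^α − 1)/log(t^α) for t ≠ 1, with ψ(1) = 1. -/
noncomputable def psiA (α t : ℝ) : ℝ :=
  if t = 1 then 1 else (t ^ α - 1) / Real.log (t ^ α)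

/-- The inverse Laplace exponent expressed via the Lambert W function: `w` is the value of the
appropriate real branch of W at `−(1/y)e^{−1/y}` (branch `W₋₁`, i.e. `w ≤ -1`, for `y > 1`;
branch `W₀`, i.e. `w ≥ -1`, for `y ∈ (0,1)`), characterized by `w * exp w = −(1/y)e^{−1/y}`.
Then ψ⁻¹(y) = (−y·w)^{1/α}; moreover ψ⁻¹(1) = 1. -/
theorem stmt_17 (α : ℝ) (hα : 0 < α) (hα1 : α ≤ 1) :
    (∀ y w : ℝ, (1 < y ∨ (0 < y ∧ y < 1)) →
      w * Real.exp w = -(1 / y) * Real.exp (-1 / y) →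
      ((1 < y → w ≤ -1) ∧ (y < 1 → -1 ≤ w)) →
      psiA α ((-y * w) ^ (1 / α)) = y) ∧
    psiA α 1 = 1 := by
  constructor
  · intro y w hy hw hbr
    have hy0 : 0 < y := by
      rcases hy with h | h
      · linarith
      · exact h.1
    have hα0 : α ≠ 0 := ne_of_gt hα
    -- w < 0
    have hw0 : w < 0 := by
      by_contra h
      push_neg at h
      have h1 : 0 ≤ w * Real.exp w := mul_nonneg h (Real.exp_pos w).le
      have h2 : -(1 / y) * Real.exp (-1 / y) < 0 :=
        mul_neg_of_neg_of_pos (by linarith [one_div_pos.mpr hy0]) (Real.exp_pos _)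
      linarith [hw ▸ h1]
    -- key log identity: log(-w) + w = -log y - 1/y
    have hne : (-w) ≠ 0 := by linarith
    have h1 : (-w) * Real.exp w = (1 / y) * Real.exp (-1 / y) := by linarith
    have h2 : Real.log (-w) + w = -Real.log y - 1 / y := by
      have := congrArg Real.log h1
      rw [Real.log_mul hne (Real.exp_pos w).ne', Real.log_exp,
        Real.log_mul (by positivity) (Real.exp_pos _).ne', Real.log_exp,
        Real.log_div one_ne_zero (ne_of_gt hy0), Real.log_one] at this
      linarith [this, show (-1:ℝ)/y = -(1/y) from by ring]
    -- s := -y * w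
    set s : ℝ := -y * w with hs
    have hs0 : 0 < s := by
      have : 0 < y * (-w) := mul_pos hy0 (by linarith)
      linarith [this]
    have hs1 : s ≠ 1 := by
      rcases hy with h | h
      · have hwle : w ≤ -1 := hbr.1 h
        have : -y * w ≥ y := by nlinarith
        intro hc; rw [hs] at hc; linarith
      · have hwge : -1 ≤ w := hbr.2 h.2
        have : -y * w ≤ y := by nlinarith
        intro hc; rw [hs] at hc; linarith [h.2]
    -- log s = -1/y - w
    have hlogs : Real.log s = -1 / y - w := by
      have : s = y * (-w) := by ring
      rw [this, Real.log_mul (ne_of_gt hy0) hne]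
      have : -1 / y = -(1 / y) := by ring
      linarith [h2]
    -- x := s ^ (1/α)
    have hxα : (s ^ (1 / α)) ^ α = s := by
      rw [← Real.rpow_mul hs0.le, one_div, inv_mul_cancel₀ hα0, Real.rpow_one]
    have hx1 : s ^ (1 / α) ≠ 1 := by
      intro hc
      apply hs1
      rw [← hxα, hc, Real.one_rpow]
    rw [psiA, if_neg hx1, hxα, hlogs]
    have hyw : y * w + 1 ≠ 0 := by
      intro hc
      apply hs1
      have : s = -(y * w) := by ring
      rw [this]; linarith
    have h3 : -1 / y - w ≠ 0 := by
      intro hc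
      apply hyw
      have hwv : w = -1 / y := by linarith
      rw [hwv]
      field_simp
      norm_num
    rw [div_eq_iff h3, hs]
    field_simp
    ring
  · simp [psiA]
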